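/- Let p be a noncommutative polynomial in variables (x, y) and let K = (K_n) be a y²-convex free set. If p(V*(X,Y)V) = V* p(X,Y) V holds for all y²-pairs ((X,Y), V) with (X,Y) ∈ K, then for every level n, all (X₁,Y),(X₂,Y) ∈ K_n and t ∈ [0,1]: p(tX₁+(1−t)X₂, Y) = t p(X₁,Y) + (1−t) p(X₂,Y). -/

import Mathlib

open Matrix

/-- Evaluation of a noncommutative polynomial `p` in variables `(x, y)` at a
tuple of matrices `(X, Y)`. -/
noncomputable def ncEval {g h N : ℕ} (p : FreeAlgebra ℂ (Fin g ⊕ Fin h))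
    (X : Fin g → Matrix (Fin N) (Fin N) ℂ) (Y : Fin h → Matrix (Fin N) (Fin N) ℂ) :
    Matrix (Fin N) (Fin N) ℂ :=
  FreeAlgebra.lift ℂ (Sum.elim X Y) p

/-- The block-diagonal embedding as an algebra homomorphism. -/
noncomputable def blockPair (N : ℕ) :
    (Matrix (Fin N) (Fin N) ℂ × Matrix (Fin N) (Fin N) ℂ) →ₐ[ℂ]
      Matrix (Fin N ⊕ Fin N) (Fin N ⊕ Fin N) ℂ where
  toFun P := Matrix.fromBlocks P.1 0 0 P.2
  map_one' := by simp [Matrix.fromBlocks_one]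
  map_mul' P Q := by simp [Matrix.fromBlocks_multiply]
  map_zero' := by simp
  map_add' P Q := by simp [Matrix.fromBlocks_add]
  commutes' c := by
    have h1 : (algebraMap ℂ (Matrix (Fin N) (Fin N) ℂ × Matrix (Fin N) (Fin N) ℂ) c) =
        (algebraMap ℂ _ c, algebraMap ℂ _ c) := rfl
    rw [h1]
    show Matrix.fromBlocks (algebraMap ℂ _ c) 0 0 (algebraMap ℂ _ c) = _
    rw [Matrix.algebraMap_eq_diagonal, Matrix.algebraMap_eq_diagonal,
      Matrix.fromBlocks_diagonal]
    congr 1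
    funext i
    cases i <;> rfl

lemma comp_lemma {N : ℕ} (c d : ℂ) (hc : star c = c) (hd : star d = d)
    (A B : Matrix (Fin N) (Fin N) ℂ) :
    ((Matrix.fromRows (c • (1 : Matrix (Fin N) (Fin N) ℂ)) (d • 1))ᴴ : Matrix (Fin N) (Fin N ⊕ Fin N) ℂ) *
      Matrix.fromBlocks A 0 0 B *
        (Matrix.fromRows (c • (1 : Matrix (Fin N) (Fin N) ℂ)) (d • 1) : Matrix (Fin N ⊕ Fin N) (Fin N) ℂ) =
      (c * c) • A + (d * d) • B := by
  rw [Matrix.conjTranspose_fromRows_eq_fromCols_conjTranspose,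
      Matrix.fromCols_mul_fromBlocks, Matrix.fromCols_mul_fromRows]
  simp [Matrix.conjTranspose_smul, hc, hd, smul_smul, smul_mul_assoc, mul_smul_comm]

/-- If a noncommutative polynomial `p` is a `y²`-affine map on a `y²`-convex
free set `K` (i.e. `p(V*(X,Y)V) = V* p(X,Y) V` for all `y²`-pairs), then it is
affine in `x` for every fixed `y` at every level of `K`. -/
theorem stmt_19 (g h : ℕ) (p : FreeAlgebra ℂ (Fin g ⊕ Fin h))
    (K : ∀ N : ℕ, Set ((Fin g → Matrix (Fin N) (Fin N) ℂ) ×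
      (Fin h → Matrix (Fin N) (Fin N) ℂ)))
    -- K consists of tuples of self-adjoint matrices
    (hherm : ∀ N, ∀ P ∈ K N, (∀ j, (P.1 j).IsHermitian) ∧ ∀ j, (P.2 j).IsHermitian)
    -- K is closed under direct sums
    (hdsum : ∀ N M, ∀ P ∈ K N, ∀ Q ∈ K M,
      ((fun j => Matrix.reindex finSumFinEquiv finSumFinEquiv
          (Matrix.fromBlocks (P.1 j) 0 0 (Q.1 j)),
        fun j => Matrix.reindex finSumFinEquiv finSumFinEquiv
          (Matrix.fromBlocks (P.2 j) 0 0 (Q.2 j))) ∈ K (N + M)))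
    -- K is closed under unitary conjugation
    (hunitary : ∀ N, ∀ P ∈ K N, ∀ U : Matrix (Fin N) (Fin N) ℂ,
      Uᴴ * U = 1 → U * Uᴴ = 1 →
      ((fun j => Uᴴ * P.1 j * U, fun j => Uᴴ * P.2 j * U) ∈ K N))
    -- K is y²-convex: closed under compressions along y²-pairs
    (hconvex : ∀ N r : ℕ, ∀ P ∈ K N, ∀ V : Matrix (Fin N) (Fin r) ℂ,
      Vᴴ * V = 1 →
      (∀ j, Vᴴ * (P.2 j * P.2 j) * V = (Vᴴ * P.2 j * V) * (Vᴴ * P.2 j * V)) →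
      ((fun j => Vᴴ * P.1 j * V, fun j => Vᴴ * P.2 j * V) ∈ K r))
    -- p is a y²-affine map on K
    (hy2aff : ∀ N r : ℕ, ∀ P ∈ K N, ∀ V : Matrix (Fin N) (Fin r) ℂ,
      Vᴴ * V = 1 →
      (∀ j, Vᴴ * (P.2 j * P.2 j) * V = (Vᴴ * P.2 j * V) * (Vᴴ * P.2 j * V)) →
      ncEval p (fun j => Vᴴ * P.1 j * V) (fun j => Vᴴ * P.2 j * V) =
        Vᴴ * ncEval p P.1 P.2 * V) :
    ∀ N : ℕ, ∀ X₁ X₂ : Fin g → Matrix (Fin N) (Fin N) ℂ,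
      ∀ Y : Fin h → Matrix (Fin N) (Fin N) ℂ,
      (X₁, Y) ∈ K N → (X₂, Y) ∈ K N → ∀ t : ℝ, t ∈ Set.Icc (0:ℝ) 1 →
        ncEval p (fun j => (t : ℂ) • X₁ j + ((1 - t : ℝ) : ℂ) • X₂ j) Y =
          (t : ℂ) • ncEval p X₁ Y + ((1 - t : ℝ) : ℂ) • ncEval p X₂ Y := by
  intro N X₁ X₂ Y hX₁ hX₂ t ht
  clear hherm hunitary hconvex
  set e : Fin N ⊕ Fin N ≃ Fin (N + N) := finSumFinEquiv with he
  set c : ℂ := ((Real.sqrt t : ℝ) : ℂ) with hcdef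
  set d : ℂ := ((Real.sqrt (1 - t) : ℝ) : ℂ) with hddef
  have hcstar : star c = c := by simp [hcdef, Complex.star_def]
  have hdstar : star d = d := by simp [hddef, Complex.star_def]
  have hc2 : c * c = (t : ℂ) := by
    rw [hcdef]; norm_cast; exact Real.mul_self_sqrt ht.1
  have hd2 : d * d = ((1 - t : ℝ) : ℂ) := by
    rw [hddef]; norm_cast; exact Real.mul_self_sqrt (by linarith [ht.2])
  have hsum : c * c + d * d = 1 := by rw [hc2, hd2]; push_cast; ring
  -- the isometry V
  set V₀ : Matrix (Fin N ⊕ Fin N) (Fin N) ℂ := Matrix.fromRows (c • 1) (d • 1) with hV₀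
  set V : Matrix (Fin (N + N)) (Fin N) ℂ := V₀.submatrix e.symm id with hV
  -- the block diagonal algebra hom
  set φ : (Matrix (Fin N) (Fin N) ℂ × Matrix (Fin N) (Fin N) ℂ) →ₐ[ℂ]
      Matrix (Fin (N + N)) (Fin (N + N)) ℂ :=
    ((Matrix.reindexAlgEquiv ℂ ℂ e).toAlgHom).comp (blockPair N) with hφ
  have hφ_apply : ∀ A B : Matrix (Fin N) (Fin N) ℂ,
      φ (A, B) = Matrix.reindex e e (Matrix.fromBlocks A 0 0 B) := fun A B => rfl
  have hVconj : Vᴴ = V₀ᴴ.submatrix id ⇑e.symm := by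
    rw [hV, Matrix.conjTranspose_submatrix]
  -- key compression computation
  have key : ∀ A B : Matrix (Fin N) (Fin N) ℂ,
      Vᴴ * φ (A, B) * V = (c * c) • A + (d * d) • B := by
    intro A B
    rw [hφ_apply, Matrix.reindex_apply, hVconj, hV,
      Matrix.submatrix_mul_equiv _ _ _ e.symm, Matrix.submatrix_mul_equiv _ _ _ e.symm,
      Matrix.submatrix_id_id]
    exact comp_lemma c d hcstar hdstar A B
  have hVV : Vᴴ * V = 1 := by
    rw [hVconj, hV, Matrix.submatrix_mul_equiv _ _ _ e.symm, Matrix.submatrix_id_id, hV₀,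
      Matrix.conjTranspose_fromRows_eq_fromCols_conjTranspose,
      Matrix.fromCols_mul_fromRows]
    simp [Matrix.conjTranspose_smul, hcstar, hdstar, smul_smul]
    rw [← add_smul, hsum, one_smul]
  -- the direct sum pair
  set Z : Fin g → Matrix (Fin (N + N)) (Fin (N + N)) ℂ := fun j => φ (X₁ j, X₂ j) with hZ
  set W : Fin h → Matrix (Fin (N + N)) (Fin (N + N)) ℂ := fun j => φ (Y j, Y j) with hW
  have hmem : (Z, W) ∈ K (N + N) := hdsum N N (X₁, Y) hX₁ (X₂, Y) hX₂
  have hWV : ∀ j, Vᴴ * W j * V = Y j := by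
    intro j
    rw [hW, key, ← add_smul, hsum, one_smul]
  have hy2 : ∀ j, Vᴴ * (W j * W j) * V = (Vᴴ * W j * V) * (Vᴴ * W j * V) := by
    intro j
    have : W j * W j = φ (Y j * Y j, Y j * Y j) := by
      simp only [hW]; exact (_root_.map_mul φ (Y j, Y j) (Y j, Y j)).symm
    rw [this, key, hWV, ← add_smul, hsum, one_smul]
  -- the evaluation in the product algebra
  set q : FreeAlgebra ℂ (Fin g ⊕ Fin h) →ₐ[ℂ]
      (Matrix (Fin N) (Fin N) ℂ × Matrix (Fin N) (Fin N) ℂ) :=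
    FreeAlgebra.lift ℂ (Sum.elim (fun j => (X₁ j, X₂ j)) (fun j => (Y j, Y j))) with hq
  have hfst : (AlgHom.fst ℂ _ _).comp q = FreeAlgebra.lift ℂ (Sum.elim X₁ Y) := by
    apply FreeAlgebra.hom_ext
    funext i
    cases i <;> simp only [Function.comp_apply, AlgHom.comp_apply,
      FreeAlgebra.lift_ι_apply, Sum.elim_inl, Sum.elim_inr, hq] <;> rfl
  have hsnd : (AlgHom.snd ℂ _ _).comp q = FreeAlgebra.lift ℂ (Sum.elim X₂ Y) := by
    apply FreeAlgebra.hom_ext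
    funext i
    cases i <;> simp only [Function.comp_apply, AlgHom.comp_apply,
      FreeAlgebra.lift_ι_apply, Sum.elim_inl, Sum.elim_inr, hq] <;> rfl
  have hcomp : φ.comp q = FreeAlgebra.lift ℂ (Sum.elim Z W) := by
    apply FreeAlgebra.hom_ext
    funext i
    cases i <;> simp [hq, hZ, hW]
  have hZW : ncEval p Z W = φ ((q p).1, (q p).2) := by
    rw [ncEval, ← hcomp]; simp
  have hqp1 : (q p).1 = ncEval p X₁ Y := by
    rw [ncEval, ← hfst]; rfl
  have hqp2 : (q p).2 = ncEval p X₂ Y := by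
    rw [ncEval, ← hsnd]; rfl
  -- apply the y²-affineness hypothesis
  have main := hy2aff (N + N) N (Z, W) hmem V hVV hy2
  simp only at main
  have hXV : (fun j => Vᴴ * Z j * V) =
      fun j => (t : ℂ) • X₁ j + ((1 - t : ℝ) : ℂ) • X₂ j := by
    funext j
    rw [hZ, key, hc2, hd2]
  have hYV : (fun j => Vᴴ * W j * V) = Y := funext hWV
  rw [hXV, hYV] at main
  rw [main, hZW, key, hqp1, hqp2, hc2, hd2]
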